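/- Let ℓ and n be positive integers and q > 1 a prime power. If ℓ(q−1) + 1 divides qⁿ, then ℓ = (q^i − 1)/(q − 1) for some i ∈ {1, 2, …, n}. -/

import Mathlib

/-- Lemma 2.6: Let ℓ and n be positive integers and q > 1 a prime power.
If (ℓ(q-1)+1) ∣ qⁿ, then ℓ = (qⁱ-1)/(q-1) for some i = 1, 2, …, n. -/
theorem stmt_4 (q : ℕ) (hq : IsPrimePow q) (hq1 : 1 < q) (l n : ℕ) (hl : 0 < l)
    (hn : 0 < n) (hdvd : l * (q - 1) + 1 ∣ q ^ n) :
    ∃ i, 1 ≤ i ∧ i ≤ n ∧ l = (q ^ i - 1) / (q - 1) := by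
  obtain ⟨p, k, hp, hk, rfl⟩ := hq
  have hpp : Nat.Prime p := Nat.prime_iff.mpr hp
  have hp1 : 1 < p := hpp.one_lt
  have hdvd' : l * (p ^ k - 1) + 1 ∣ p ^ (k * n) := by rwa [pow_mul]
  obtain ⟨j, hjle, hje⟩ := (Nat.dvd_prime_pow hpp).mp hdvd'
  set r := j % k with hr
  set a := j / k with ha
  have hdecomp : p ^ j = (p ^ k) ^ a * p ^ r := by
    rw [← pow_mul, ← pow_add, Nat.div_add_mod]
  have h1 : p ^ k ≡ 1 [MOD p ^ k - 1] :=
    ((Nat.modEq_iff_dvd' (le_of_lt hq1)).mpr dvd_rfl).symm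
  have h2 : p ^ j ≡ 1 [MOD p ^ k - 1] := by
    rw [← hje]
    calc l * (p ^ k - 1) + 1 ≡ 0 + 1 [MOD p ^ k - 1] :=
          Nat.ModEq.add_right 1 ((Nat.modEq_zero_iff_dvd).mpr ⟨l, mul_comm _ _⟩)
      _ = 1 := by ring
  have h3 : p ^ r ≡ 1 [MOD p ^ k - 1] := by
    calc p ^ r ≡ 1 ^ a * p ^ r [MOD p ^ k - 1] := by rw [one_pow, one_mul]
      _ ≡ (p ^ k) ^ a * p ^ r [MOD p ^ k - 1] := ((h1.symm.pow a).mul_right _)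
      _ = p ^ j := hdecomp.symm
      _ ≡ 1 [MOD p ^ k - 1] := h2
  have hdvd3 : p ^ k - 1 ∣ p ^ r - 1 :=
    (Nat.modEq_iff_dvd' (Nat.one_le_iff_ne_zero.mpr (pow_ne_zero r (by omega)))).mp h3.symm
  have hrlt : r < k := Nat.mod_lt _ hk
  have hprlt : p ^ r < p ^ k := Nat.pow_lt_pow_right hp1 hrlt
  have hpr1 : 1 ≤ p ^ r := Nat.one_le_pow _ _ (by omega)
  have hr0 : r = 0 := by
    have h0 : p ^ r - 1 = 0 := Nat.eq_zero_of_dvd_of_lt hdvd3 (by omega)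
    by_contra h
    have : 1 < p ^ r := Nat.one_lt_pow h hp1
    omega
  have hkj : k ∣ j := Nat.dvd_of_mod_eq_zero (hr.symm.trans hr0)
  have hja : j = k * a := by rw [ha]; exact (Nat.mul_div_cancel' hkj).symm
  have hqa : l * (p ^ k - 1) + 1 = (p ^ k) ^ a := by
    rw [hje, hja, pow_mul]
  have ha1 : 1 ≤ a := by
    by_contra h
    have : a = 0 := Nat.lt_one_iff.mp (not_le.mp h)
    rw [this, pow_zero] at hqa
    have : l * (p ^ k - 1) = 0 := by omega
    rcases Nat.mul_eq_zero.mp this with h' | h' <;> omega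
  have han : a ≤ n := by
    have hle : (p ^ k) ^ a ≤ (p ^ k) ^ n := by
      rw [← hqa]
      exact Nat.le_of_dvd (pow_pos (by omega) n) hdvd
    exact (Nat.pow_le_pow_iff_right hq1).mp hle
  refine ⟨a, ha1, han, ?_⟩
  have hml : l * (p ^ k - 1) = (p ^ k) ^ a - 1 := by omega
  rw [← hml, Nat.mul_div_cancel l (by omega)]
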